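/- For every H ∈ (0,1), the following integral identity holds: (1/Γ(H+1/2)²) [ ∫₀^∞ ( (1+s)^{H−1/2} − s^{H−1/2} )² ds + 1/(2H) ] = 1/( Γ(2H+1) sin(πH) ). (In particular the integral on the left is finite.) -/

import Mathlib

open MeasureTheory Real Set Filter Topology

namespace FBMaux

lemma cpow_eq_real (x y : ℝ) (hx : 0 ≤ x) : ((x:ℂ) ^ ((y:ℝ):ℂ)) = (((x ^ y : ℝ)) : ℂ) := by
  rw [Complex.ofReal_cpow hx]

-- real Beta on (0,1)
lemma realBeta_integrable {p q : ℝ} (hp : 0 < p) (hq : 0 < q) :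
    IntegrableOn (fun t : ℝ => t ^ (p-1) * (1-t) ^ (q-1)) (Ioo 0 1) := by
  have h := (Complex.betaIntegral_convergent (u := (p:ℂ)) (v := (q:ℂ)) (by simpa) (by simpa))
  rw [intervalIntegrable_iff_integrableOn_Ioc_of_le zero_le_one] at h
  have h2 : IntegrableOn
      (fun x : ℝ => Complex.re ((x:ℂ) ^ ((p:ℂ)-1) * (1 - (x:ℂ)) ^ ((q:ℂ)-1))) (Ioc 0 1) := h.re
  refine ((h2.mono_set Ioo_subset_Ioc_self).congr_fun ?_ measurableSet_Ioo)
  intro x hx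
  show Complex.re ((x:ℂ) ^ ((p:ℂ)-1) * (1 - (x:ℂ)) ^ ((q:ℂ)-1)) = x ^ (p-1) * (1-x) ^ (q-1)
  rw [show ((x:ℂ) ^ ((p:ℂ)-1)) = (((x ^ (p-1) : ℝ)) : ℂ) by
        rw [Complex.ofReal_cpow hx.1.le]; norm_num,
      show ((1 - (x:ℂ)) ^ ((q:ℂ)-1)) = (((1 - x) ^ (q-1) : ℝ) : ℂ) by
        rw [show (1 - (x:ℂ)) = (((1:ℝ) - x : ℝ) : ℂ) by push_cast; ring,
          Complex.ofReal_cpow (by linarith [hx.2])]; norm_num]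
  rw [← Complex.ofReal_mul, Complex.ofReal_re]

lemma realBeta_eq {p q : ℝ} (hp : 0 < p) (hq : 0 < q) :
    ∫ t in Ioo (0:ℝ) 1, t ^ (p-1) * (1-t) ^ (q-1)
      = Gamma p * Gamma q / Gamma (p+q) := by
  have key : Complex.Gamma p * Complex.Gamma q
      = Complex.Gamma (p+q) * Complex.betaIntegral p q := by
    have := Complex.Gamma_mul_Gamma_eq_betaIntegral (s := (p:ℂ)) (t := (q:ℂ))
      (by simpa) (by simpa)
    simpa using this
  have hpq : Gamma (p+q) ≠ 0 := (Gamma_pos_of_pos (by linarith)).ne'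
  have hne : Complex.Gamma ((p:ℂ)+q) ≠ 0 := by
    rw [show ((p:ℂ)+q) = ((p+q : ℝ) : ℂ) by push_cast; ring, Complex.Gamma_ofReal]
    exact_mod_cast hpq
  have hbeta : Complex.betaIntegral p q = Complex.Gamma p * Complex.Gamma q / Complex.Gamma ((p:ℂ)+q) := by
    field_simp [key]
    rw [key]; ring
  have h1 : Complex.betaIntegral p q
      = ((∫ t in Ioo (0:ℝ) 1, t ^ (p-1) * (1-t) ^ (q-1) : ℝ) : ℂ) := by
    rw [← MeasureTheory.integral_Ioc_eq_integral_Ioo,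
      ← intervalIntegral.integral_of_le (zero_le_one), Complex.betaIntegral,
      ← intervalIntegral.integral_ofReal]
    apply intervalIntegral.integral_congr
    intro x hx
    rw [uIcc_of_le zero_le_one] at hx
    simp only
    rw [show ((x:ℂ) ^ ((p:ℂ)-1)) = (((x ^ (p-1) : ℝ)) : ℂ) by
        rw [Complex.ofReal_cpow hx.1]; norm_num,
      show ((1 - (x:ℂ)) ^ ((q:ℂ)-1)) = (((1 - x) ^ (q-1) : ℝ) : ℂ) by
        rw [show (1 - (x:ℂ)) = (((1:ℝ) - x : ℝ) : ℂ) by push_cast; ring,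
          Complex.ofReal_cpow (by linarith [hx.2])]; norm_num]
    push_cast
    ring
  rw [h1] at hbeta
  have h2 : ((Gamma p * Gamma q / Gamma (p+q) : ℝ) : ℂ)
      = Complex.Gamma p * Complex.Gamma q / Complex.Gamma ((p:ℂ)+q) := by
    rw [show ((p:ℂ)+q) = ((p+q : ℝ) : ℂ) by push_cast; ring]
    rw [Complex.Gamma_ofReal, Complex.Gamma_ofReal, Complex.Gamma_ofReal]
    push_cast
    ring
  rw [← h2] at hbeta
  exact_mod_cast hbeta


lemma subst_facts :
    (Ioi (0:ℝ)) = (fun t : ℝ => t/(1-t)) '' (Ioo 0 1) := by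
  ext y
  constructor
  · intro hy
    have hy' : (0:ℝ) < y := mem_Ioi.mp hy
    have h1 : (0:ℝ) < 1 + y := by linarith
    refine ⟨y/(1+y), ⟨by positivity, ?_⟩, ?_⟩
    · rw [div_lt_one h1]; linarith
    · field_simp; ring
  · rintro ⟨t, ht, rfl⟩
    have h1 : (0:ℝ) < 1 - t := by linarith [ht.2]
    exact mem_Ioi.mpr (div_pos ht.1 h1)

lemma hasDeriv_subst {t : ℝ} (ht : t ≠ 1) :
    HasDerivAt (fun t : ℝ => t/(1-t)) (1/(1-t)^2) t := by
  have hne : (1:ℝ) - t ≠ 0 := fun h' => ht (sub_eq_zero.mp h').symm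
  have h := (hasDerivAt_id t).div ((hasDerivAt_id t).const_sub 1) hne
  refine h.congr_deriv ?_
  simp only [id]
  ring

lemma inj_subst : InjOn (fun t : ℝ => t/(1-t)) (Ioo 0 1) := by
  intro x hx y hy hxy
  have h1 : (0:ℝ) < 1 - x := by linarith [hx.2]
  have h2 : (0:ℝ) < 1 - y := by linarith [hy.2]
  field_simp at hxy
  nlinarith [hxy]

lemma betaIoi_transfer (g : ℝ → ℝ) :
    (∫ s in Ioi (0:ℝ), g s) = ∫ t in Ioo (0:ℝ) 1, |1/(1-t)^2| • g (t/(1-t)) := by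
  rw [subst_facts]
  exact integral_image_eq_integral_abs_deriv_smul measurableSet_Ioo
    (fun x hx => (hasDeriv_subst (by linarith [hx.2] : x ≠ 1)).hasDerivWithinAt) inj_subst g

lemma betaIoi_transfer_int (g : ℝ → ℝ) :
    IntegrableOn g (Ioi (0:ℝ)) ↔
      IntegrableOn (fun t => |1/(1-t)^2| • g (t/(1-t))) (Ioo (0:ℝ) 1) := by
  rw [subst_facts]
  exact integrableOn_image_iff_integrableOn_abs_deriv_smul measurableSet_Ioo
    (fun x hx => (hasDeriv_subst (by linarith [hx.2] : x ≠ 1)).hasDerivWithinAt) inj_subst g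

lemma beta_pointwise (p q : ℝ) {t : ℝ} (ht : t ∈ Ioo (0:ℝ) 1) :
    |1/(1-t)^2| • ((t/(1-t)) ^ (p-1) * (1+(t/(1-t))) ^ (-(p+q)))
      = t ^ (p-1) * (1-t) ^ (q-1) := by
  have h0 : (0:ℝ) < t := ht.1
  have h1 : (0:ℝ) < 1 - t := by linarith [ht.2]
  have eA : (t/(1-t)) ^ (p-1) = t^(p-1) * (1-t)^(1-p) := by
    rw [div_rpow h0.le h1.le, show (1-p) = -(p-1) by ring, rpow_neg h1.le, div_eq_mul_inv]
  have eB : (1+(t/(1-t))) ^ (-(p+q)) = (1-t)^(p+q) := by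
    rw [show 1 + t/(1-t) = (1-t)⁻¹ by field_simp; ring, ← Real.rpow_neg_one (1-t), ← rpow_mul h1.le]
    norm_num
  have eC : |1/(1-t)^2| = (1-t)^((-2 : ℝ)) := by
    rw [abs_of_pos (by positivity), one_div, ← Real.rpow_natCast (1-t) 2, ← rpow_neg h1.le]
    norm_num
  rw [eA, eB, eC, smul_eq_mul,
    show (1-t)^((-2:ℝ)) * (t^(p-1) * (1-t)^(1-p) * (1-t)^(p+q))
      = t^(p-1) * ((1-t)^((-2:ℝ)) * ((1-t)^(1-p) * (1-t)^(p+q))) by ring,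
    ← rpow_add h1, ← rpow_add h1]
  norm_num
  left
  ring


-- Beta integral over Ioi 0
lemma betaIoi_integrable {p q : ℝ} (hp : 0 < p) (hq : 0 < q)
    (hreal : IntegrableOn (fun t : ℝ => t ^ (p-1) * (1-t) ^ (q-1)) (Ioo 0 1))
    (trans : IntegrableOn (fun s : ℝ => s^(p-1)*(1+s)^(-(p+q))) (Ioi (0:ℝ)) ↔
      IntegrableOn (fun t => |1/(1-t)^2| • ((t/(1-t))^(p-1)*(1+(t/(1-t)))^(-(p+q)))) (Ioo (0:ℝ) 1))
    (ptw : ∀ t ∈ Ioo (0:ℝ) 1, |1/(1-t)^2| • ((t/(1-t)) ^ (p-1) * (1+(t/(1-t))) ^ (-(p+q)))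
      = t ^ (p-1) * (1-t) ^ (q-1)) :
    IntegrableOn (fun s : ℝ => s^(p-1)*(1+s)^(-(p+q))) (Ioi 0) := by
  rw [trans]
  exact hreal.congr_fun (fun t ht => (ptw t ht).symm) measurableSet_Ioo

-- MVT bound
lemma mvt_bound {a : ℝ} (ha2 : a < 1) {s : ℝ} (hs : 0 < s) :
    |(1+s)^a - s^a| ≤ |a| * s^(a-1) := by
  rcases eq_or_ne a 0 with rfl | ha
  · simp
  have hcont : ContinuousOn (fun x : ℝ => x ^ a) (Icc s (s+1)) := fun x hx =>
    (Real.continuousAt_rpow_const x a (Or.inl (by linarith [hx.1] : x ≠ 0))).continuousWithinAt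
  have hderiv : ∀ x ∈ Ioo s (s+1), HasDerivAt (fun x : ℝ => x^a) (a * x^(a-1)) x := fun x hx =>
    Real.hasDerivAt_rpow_const (Or.inl (by linarith [hx.1] : x ≠ 0))
  obtain ⟨c, hc, hceq⟩ := exists_hasDerivAt_eq_slope (fun x : ℝ => x^a) _
    (by linarith : s < s+1) hcont hderiv
  have hc0 : 0 < c := lt_trans hs hc.1
  rw [show s+1-(s:ℝ) = 1 by ring, div_one] at hceq
  rw [show (1+s:ℝ) = s+1 by ring, ← hceq, abs_mul, abs_of_nonneg (rpow_nonneg hc0.le _)]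
  exact mul_le_mul_of_nonneg_left
    (rpow_le_rpow_of_nonpos hs hc.1.le (by linarith)) (abs_nonneg a)

lemma g_cont (a : ℝ) : ContinuousOn (fun s : ℝ => ((1+s)^a - s^a)^2) (Ioi (0:ℝ)) := by
  intro s hs
  have hs' : (0:ℝ) < s := hs
  have h1 : ContinuousAt (fun s : ℝ => (1+s)^a) s :=
    ContinuousAt.rpow_const (by fun_prop) (Or.inl (by intro h; linarith))
  have h2 : ContinuousAt (fun s : ℝ => s^a) s :=
    Real.continuousAt_rpow_const s a (Or.inl hs'.ne')
  exact ((h1.sub h2).pow 2).continuousWithinAt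

lemma g_integrable {a : ℝ} (ha1 : -(1/2 : ℝ) < a) (ha2 : a < 1/2) :
    IntegrableOn (fun s : ℝ => ((1+s)^a - s^a)^2) (Ioi (0:ℝ)) := by
  have hmain : IntegrableOn (fun s : ℝ => ((1+s)^a - s^a)^2) (Ioc (0:ℝ) 1) ∧
      IntegrableOn (fun s : ℝ => ((1+s)^a - s^a)^2) (Ioi (1:ℝ)) := by
    constructor
    · -- bound by 8 + 2 s^(2a)
      have hbd : IntegrableOn (fun s : ℝ => 8 + 2*s^(2*a)) (Ioc (0:ℝ) 1) := by
        apply Integrable.add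
        · exact integrableOn_const measure_Ioc_lt_top.ne
        · exact ((intervalIntegrable_iff_integrableOn_Ioc_of_le zero_le_one).mp
            (intervalIntegral.intervalIntegrable_rpow'
              (by linarith : (-1:ℝ) < 2*a))).const_mul 2
      refine hbd.mono' (((g_cont a).mono Ioc_subset_Ioi_self).aestronglyMeasurable
        measurableSet_Ioc) ?_
      rw [ae_restrict_iff' measurableSet_Ioc]
      filter_upwards with s hs
      have hs0 : (0:ℝ) < s := hs.1
      have hP0 : (0:ℝ) ≤ (1+s)^a := rpow_nonneg (by linarith) a
      have hQ0 : (0:ℝ) ≤ s^a := rpow_nonneg hs0.le a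
      have hP2 : (1+s)^a ≤ 2 := by
        rcases le_or_gt a 0 with h | h
        · have := rpow_le_one_of_one_le_of_nonpos (by linarith : (1:ℝ) ≤ 1+s) h
          linarith
        · have h1 : (1+s)^a ≤ (2:ℝ)^a :=
            rpow_le_rpow (by linarith) (by linarith [hs.2]) h.le
          have h2 : (2:ℝ)^a ≤ (2:ℝ)^(1:ℝ) :=
            rpow_le_rpow_of_exponent_le one_le_two (by linarith)
          rw [rpow_one] at h2
          linarith
      have habs : |(1+s)^a - s^a| ≤ 2 + s^a := by
        rw [abs_sub_le_iff]
        constructor <;> linarith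
      have hsq : ((1+s)^a - s^a)^2 ≤ (2 + s^a)^2 := by
        have := abs_le.mp habs
        exact sq_le_sq' (by linarith [this.1]) this.2
      have hflat : s^a * s^a = s^(2*a) := by
        rw [← rpow_add hs0]; ring_nf
      rw [Real.norm_eq_abs, abs_of_nonneg (sq_nonneg _)]
      nlinarith [sq_nonneg (2 - s^a)]
    · -- bound by a^2 * s^(2a-2)
      have hbd : IntegrableOn (fun s : ℝ => a^2 * s^(2*a-2)) (Ioi (1:ℝ)) :=
        (integrableOn_Ioi_rpow_of_lt (by linarith) one_pos).const_mul _
      refine hbd.mono' (((g_cont a).mono (Ioi_subset_Ioi zero_le_one)).aestronglyMeasurable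
        measurableSet_Ioi) ?_
      rw [ae_restrict_iff' measurableSet_Ioi]
      filter_upwards with s hs
      have hs0 : (0:ℝ) < s := lt_trans one_pos hs
      have h := mvt_bound (by linarith : a < 1) hs0
      rw [Real.norm_eq_abs, abs_of_nonneg (sq_nonneg _), ← sq_abs]
      calc |(1+s)^a - s^a|^2 ≤ (|a| * s^(a-1))^2 := by
            apply pow_le_pow_left₀ (abs_nonneg _) h
        _ = a^2 * s^(2*a-2) := by
            rw [mul_pow, sq_abs, ← rpow_natCast (s^(a-1)) 2, ← rpow_mul hs0.le,
              show (a-1)*((2:ℕ):ℝ) = 2*a-2 by push_cast; ring]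
  have := hmain.1.union hmain.2
  rwa [Ioc_union_Ioi_eq_Ioi zero_le_one] at this

-- slope limit helper
lemma slope_tendsto (c : ℝ) :
    Tendsto (fun s : ℝ => ((1+s⁻¹)^c - 1)/s⁻¹) atTop (𝓝 c) := by
  have hd : HasDerivAt (fun u : ℝ => (1+u)^c) c 0 := by
    have := ((hasDerivAt_id (0:ℝ)).const_add 1).rpow_const (p := c) (Or.inl (by norm_num))
    simpa using this
  have h1 := hasDerivAt_iff_tendsto_slope.mp hd
  have h2 : Tendsto (fun s : ℝ => s⁻¹) atTop (𝓝[≠] (0:ℝ)) :=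
    tendsto_inv_atTop_nhdsGT_zero.mono_right
      (nhdsWithin_mono 0 (fun x hx => ne_of_gt hx))
  refine (h1.comp h2).congr (fun s => ?_)
  simp only [Function.comp_apply, slope_def_field]
  norm_num


lemma rpow_split {s : ℝ} (hs : 0 < s) (c : ℝ) : (1+s)^c = s^c * (1+s⁻¹)^c := by
  rw [← mul_rpow hs.le (by positivity), show s*(1+s⁻¹) = 1+s by rw [mul_add, mul_one, mul_inv_cancel₀ hs.ne']; ring]

lemma tendsto_G_pos {a : ℝ} (ha0 : 0 < a) (ha2 : a < 1/2) :
    Tendsto (fun s : ℝ => ((1+s)^a - s^a) * ((1+s)^(1+a) - s^(1+a))) atTop (𝓝 0) := by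
  have h1 : Tendsto (fun s : ℝ => s ^ (2*a-1)) atTop (𝓝 0) := by
    have := tendsto_rpow_neg_atTop (show (0:ℝ) < 1-2*a by linarith)
    rw [show -(1-2*a) = 2*a-1 by ring] at this
    exact this
  have h2 := (slope_tendsto a).mul (slope_tendsto (1+a))
  have h3 := h1.mul h2
  rw [zero_mul] at h3
  refine h3.congr' ?_
  filter_upwards [eventually_gt_atTop (0:ℝ)] with s hs
  have hsne : s ≠ 0 := hs.ne'
  have e1 : (1+s)^a - s^a = s^a * ((1+s⁻¹)^a - 1) := by
    rw [rpow_split hs a]; ring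
  have e2 : (1+s)^(1+a) - s^(1+a) = s^(1+a) * ((1+s⁻¹)^(1+a) - 1) := by
    rw [rpow_split hs (1+a)]; ring
  rw [e1, e2]
  simp only [div_eq_mul_inv, inv_inv]
  rw [show s^(2*a-1) * (((1+s⁻¹)^a - 1)*s*((((1+s⁻¹)^(1+a) - 1))*s))
      = (s^(2*a-1)*s*s) * (((1+s⁻¹)^a - 1) * ((1+s⁻¹)^(1+a) - 1)) by ring]
  rw [show s^(2*a-1)*s*s = s^(2*a-1)*s^(1:ℝ)*s^(1:ℝ) by rw [rpow_one],
    ← rpow_add hs, ← rpow_add hs, show 2*a-1+1+1 = (a)+(1+a) by ring, rpow_add hs]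
  ring

lemma tendsto_G_neg {a : ℝ} (ha1 : -(1/2:ℝ) < a) (ha0 : a < 0) :
    Tendsto (fun s : ℝ => (1+s)^(1+2*a) + s^(1+2*a) - 2*(s^(1+a)*(1+s)^a)) atTop (𝓝 0) := by
  have h1 : Tendsto (fun s : ℝ => s ^ (2*a)) atTop (𝓝 0) := by
    have := tendsto_rpow_neg_atTop (show (0:ℝ) < -(2*a) by linarith)
    rw [neg_neg] at this
    exact this
  have h2 := (slope_tendsto (1+2*a)).sub ((slope_tendsto a).const_mul 2)
  have h3 := h1.mul h2
  rw [zero_mul] at h3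
  refine h3.congr' ?_
  filter_upwards [eventually_gt_atTop (0:ℝ)] with s hs
  have e1 : (1+s)^(1+2*a) = s^(1+2*a) * (1+s⁻¹)^(1+2*a) := rpow_split hs _
  have e2 : (1+s)^a = s^a * (1+s⁻¹)^a := rpow_split hs _
  simp only [div_eq_mul_inv, inv_inv]
  rw [e1, e2]
  have e3 : s^(1+a) * (s^a * (1+s⁻¹)^a) = s^(1+2*a) * (1+s⁻¹)^a := by
    rw [show s^(1+a) * (s^a * (1+s⁻¹)^a) = s^(1+a)*s^a*(1+s⁻¹)^a by ring,
      ← rpow_add hs, show 1+a+a = 1+2*a by ring]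
  rw [e3]
  rw [show s^(2*a) * (((1+s⁻¹)^(1+2*a) - 1)*s - 2*((((1+s⁻¹)^a - 1))*s))
      = (s^(2*a)*s) * ((1+s⁻¹)^(1+2*a) - 1 - 2*((1+s⁻¹)^a - 1)) by ring]
  rw [show s^(2*a)*s = s^(2*a)*s^(1:ℝ) by rw [rpow_one], ← rpow_add hs,
    show 2*a+1 = 1+2*a by ring]
  ring

lemma gamma_star {H : ℝ} (h0 : 0 < H) (h1 : H < 1) (hne : H ≠ 1/2) :
    Gamma (2-2*H) * Gamma (2*H+1) * Real.sin (π*H)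
      = 2*H*Gamma (3/2-H)*Gamma (H+1/2) := by
  have hsin : 0 < Real.sin (π*H) := sin_pos_of_pos_of_lt_pi (by positivity)
    (by nlinarith [pi_pos])
  have hcos : Real.cos (π*H) ≠ 0 := by
    rcases lt_or_gt_of_ne hne with h | h
    · exact (cos_pos_of_mem_Ioo ⟨by nlinarith [pi_pos], by nlinarith [pi_pos]⟩).ne'
    · exact (cos_neg_of_pi_div_two_lt_of_lt (by nlinarith [pi_pos]) (by nlinarith [pi_pos])).ne
  have e1 : Gamma (2*H+1) = 2*H*Gamma (2*H) := Gamma_add_one (by positivity)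
  have e2 : Gamma (2-2*H) = (1-2*H) * Gamma (1-2*H) := by
    rw [show (2-2*H:ℝ) = (1-2*H)+1 by ring, Gamma_add_one (by intro h; apply hne; linarith)]
  have e4 : Gamma (3/2-H) = (1/2-H) * Gamma (1/2-H) := by
    rw [show (3/2-H:ℝ) = (1/2-H)+1 by ring, Gamma_add_one (by intro h; apply hne; linarith)]
  have e6 : Real.sin (π*(2*H)) = 2*Real.sin (π*H)*Real.cos (π*H) := by
    rw [show π*(2*H) = 2*(π*H) by ring, Real.sin_two_mul]
  have hsin2 : Gamma (2*H) * Gamma (1-2*H) * (2*Real.sin (π*H)*Real.cos (π*H)) = π := by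
    have hs2 : Real.sin (π*(2*H)) ≠ 0 := by
      rw [e6]; exact mul_ne_zero (mul_ne_zero two_ne_zero hsin.ne') hcos
    rw [← e6, Real.Gamma_mul_Gamma_one_sub (2*H), div_mul_cancel₀ _ hs2]
  have hcos2 : Gamma (H+1/2) * Gamma (1/2-H) * Real.cos (π*H) = π := by
    have := Real.Gamma_mul_Gamma_one_sub (H+1/2)
    rw [show (1:ℝ) - (H+1/2) = 1/2 - H by ring] at this
    rw [this, show π*(H+1/2) = π*H + π/2 by ring, Real.sin_add_pi_div_two,
      div_mul_cancel₀ _ hcos]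
  rw [e1, e2, e4]
  refine mul_right_cancel₀ hcos ?_
  linear_combination ((1-2*H)*H) * hsin2 - (2*H*(1/2-H)) * hcos2

lemma gamma_final {H : ℝ} (h0 : 0 < H) (h1 : H < 1) (hne : H ≠ 1/2) {I : ℝ}
    (hI : 2*H*I + 1 = Gamma (H+1/2) * Gamma (2-2*H) / Gamma (3/2-H)) :
    (1 / Gamma (H+1/2)^2) * (I + 1/(2*H)) = 1/(Gamma (2*H+1) * Real.sin (π*H)) := by
  have hΓ1 : 0 < Gamma (H+1/2) := Gamma_pos_of_pos (by linarith)
  have hΓ2 : 0 < Gamma (3/2-H) := Gamma_pos_of_pos (by linarith)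
  have hΓ3 : 0 < Gamma (2*H+1) := Gamma_pos_of_pos (by linarith)
  have hΓ4 : 0 < Gamma (2-2*H) := Gamma_pos_of_pos (by nlinarith)
  have hsin : 0 < Real.sin (π*H) := sin_pos_of_pos_of_lt_pi (by positivity)
    (by nlinarith [pi_pos])
  have star := gamma_star h0 h1 hne
  set A := Gamma (H+1/2) with hA
  set B := Gamma (3/2-H) with hB
  set C := Gamma (2*H+1) with hC
  set D := Gamma (2-2*H) with hD
  set S := Real.sin (π*H) with hS
  have hI' : I = (A*D/B - 1)/(2*H) := by
    field_simp at hI ⊢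
    linarith
  rw [hI']
  rw [← add_div, sub_add_cancel]
  rw [div_div]
  field_simp
  linear_combination star

lemma betaIoi_int {p q : ℝ} (hp : 0 < p) (hq : 0 < q) :
    IntegrableOn (fun s : ℝ => s^(p-1)*(1+s)^(-(p+q))) (Ioi (0:ℝ)) := by
  rw [betaIoi_transfer_int]
  exact (realBeta_integrable hp hq).congr_fun
    (fun t ht => (beta_pointwise p q ht).symm) measurableSet_Ioo

lemma betaIoi_val {p q : ℝ} (hp : 0 < p) (hq : 0 < q) :
    ∫ s in Ioi (0:ℝ), s^(p-1)*(1+s)^(-(p+q)) = Gamma p * Gamma q / Gamma (p+q) := by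
  rw [betaIoi_transfer, ← realBeta_eq hp hq]
  exact setIntegral_congr_fun measurableSet_Ioo (fun t ht => beta_pointwise p q ht)

lemma case_pos {a : ℝ} (ha0 : 0 < a) (ha2 : a < 1/2) :
    (2*a+1) * (∫ s in Ioi (0:ℝ), ((1+s)^a - s^a)^2) + 1
      = Gamma (1+a) * Gamma (1-2*a) / Gamma (1-a) := by
  have hq : (0:ℝ) < 1-2*a := by linarith
  have hint_g := g_integrable (by linarith) ha2
  have hint_β : IntegrableOn (fun s : ℝ => s^(a-1)*(1+s)^(a-1)) (Ioi (0:ℝ)) := by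
    have := betaIoi_int ha0 hq
    simpa only [show -(a+(1-2*a)) = a-1 by ring] using this
  have hval_β : ∫ s in Ioi (0:ℝ), s^(a-1)*(1+s)^(a-1)
      = Gamma a * Gamma (1-2*a) / Gamma (1-a) := by
    have := betaIoi_val ha0 hq
    simpa only [show a+(1-2*a) = 1-a by ring, show -(1-a) = a-1 by ring] using this
  have hintf : IntegrableOn
      (fun x : ℝ => (2*a+1) * ((1+x)^a - x^a)^2 - a * (x^(a-1)*(1+x)^(a-1))) (Ioi 0) :=
    (hint_g.const_mul _).sub (hint_β.const_mul _)
  have hderiv : ∀ x ∈ Ioi (0:ℝ),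
      HasDerivAt (fun s : ℝ => ((1+s)^a - s^a) * ((1+s)^(1+a) - s^(1+a)))
        ((2*a+1) * ((1+x)^a - x^a)^2 - a * (x^(a-1)*(1+x)^(a-1))) x := by
    intro x hx
    have hx0 : (0:ℝ) < x := hx
    have hx1 : (0:ℝ) < 1+x := by linarith
    have d1 : HasDerivAt (fun s : ℝ => (1+s)^a) (a*(1+x)^(a-1)) x := by
      have := ((hasDerivAt_id x).const_add 1).rpow_const (p := a) (Or.inl hx1.ne')
      simpa using this
    have d2 : HasDerivAt (fun s : ℝ => s^a) (a*x^(a-1)) x :=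
      Real.hasDerivAt_rpow_const (Or.inl hx0.ne')
    have d3 : HasDerivAt (fun s : ℝ => (1+s)^(1+a)) ((1+a)*(1+x)^(1+a-1)) x := by
      have := ((hasDerivAt_id x).const_add 1).rpow_const (p := 1+a) (Or.inl hx1.ne')
      simpa using this
    have d4 : HasDerivAt (fun s : ℝ => s^(1+a)) ((1+a)*x^(1+a-1)) x :=
      Real.hasDerivAt_rpow_const (Or.inl hx0.ne')
    have dG := (d1.sub d2).mul (d3.sub d4)
    refine dG.congr_deriv ?_
    simp only [Pi.add_apply, Pi.sub_apply, Pi.mul_apply]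
    rw [show (1+a-1 : ℝ) = a by ring, rpow_sub hx1 a 1, rpow_one, rpow_sub hx0 a 1, rpow_one,
      rpow_add hx1 1 a, rpow_one, rpow_add hx0 1 a, rpow_one]
    field_simp
    ring
  have hcont : ContinuousWithinAt
      (fun s : ℝ => ((1+s)^a - s^a) * ((1+s)^(1+a) - s^(1+a))) (Ici 0) 0 := by
    have c1 : ContinuousAt (fun s : ℝ => (1+s)^a) 0 :=
      ContinuousAt.rpow_const (by fun_prop) (Or.inl (by norm_num))
    have c2 : ContinuousAt (fun s : ℝ => s^a) 0 :=
      Real.continuousAt_rpow_const 0 a (Or.inr ha0.le)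
    have c3 : ContinuousAt (fun s : ℝ => (1+s)^(1+a)) 0 :=
      ContinuousAt.rpow_const (by fun_prop) (Or.inl (by norm_num))
    have c4 : ContinuousAt (fun s : ℝ => s^(1+a)) 0 :=
      Real.continuousAt_rpow_const 0 (1+a) (Or.inr (by linarith))
    exact ((c1.sub c2).mul (c3.sub c4)).continuousWithinAt
  have hF := integral_Ioi_of_hasDerivAt_of_tendsto hcont hderiv hintf (tendsto_G_pos ha0 ha2)
  have hG0 : ((1+(0:ℝ))^a - (0:ℝ)^a) * ((1+(0:ℝ))^(1+a) - (0:ℝ)^(1+a)) = 1 := by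
    rw [Real.zero_rpow ha0.ne', Real.zero_rpow (by linarith : (1+a:ℝ) ≠ 0)]
    norm_num
  rw [hG0] at hF
  have hsplit : ∫ x in Ioi (0:ℝ),
      ((2*a+1) * ((1+x)^a - x^a)^2 - a * (x^(a-1)*(1+x)^(a-1)))
      = (2*a+1) * (∫ s in Ioi (0:ℝ), ((1+s)^a - s^a)^2)
        - a * ∫ s in Ioi (0:ℝ), s^(a-1)*(1+s)^(a-1) := by
    rw [integral_sub (hint_g.const_mul _) (hint_β.const_mul _),
      integral_const_mul, integral_const_mul]
  rw [hsplit, hval_β] at hF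
  have hga : Gamma (1+a) = a * Gamma a := by
    rw [show (1+a:ℝ) = a+1 by ring, Gamma_add_one ha0.ne']
  rw [hga]
  linear_combination hF

lemma case_neg {a : ℝ} (ha1 : -(1/2:ℝ) < a) (ha0 : a < 0) :
    (2*a+1) * (∫ s in Ioi (0:ℝ), ((1+s)^a - s^a)^2) + 1
      = Gamma (1+a) * Gamma (1-2*a) / Gamma (1-a) := by
  have hp : (0:ℝ) < 1+a := by linarith
  have hq : (0:ℝ) < -(2*a) := by linarith
  have hint_g := g_integrable ha1 (by linarith)
  have hint_β : IntegrableOn (fun s : ℝ => s^a*(1+s)^(a-1)) (Ioi (0:ℝ)) := by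
    have := betaIoi_int hp hq
    simpa only [show (1+a)-1 = a by ring, show -((1+a)+-(2*a)) = a-1 by ring] using this
  have hval_β : ∫ s in Ioi (0:ℝ), s^a*(1+s)^(a-1)
      = Gamma (1+a) * Gamma (-(2*a)) / Gamma (1-a) := by
    have := betaIoi_val hp hq
    simpa only [show (1+a)+-(2*a) = 1-a by ring, show (1+a)-1 = a by ring,
      show -(1-a) = a-1 by ring] using this
  have hintf : IntegrableOn
      (fun x : ℝ => (2*a+1) * ((1+x)^a - x^a)^2 + 2*a * (x^a*(1+x)^(a-1))) (Ioi 0) :=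
    (hint_g.const_mul _).add (hint_β.const_mul _)
  have hderiv : ∀ x ∈ Ioi (0:ℝ),
      HasDerivAt (fun s : ℝ => (1+s)^(1+2*a) + s^(1+2*a) - 2*(s^(1+a)*(1+s)^a))
        ((2*a+1) * ((1+x)^a - x^a)^2 + 2*a * (x^a*(1+x)^(a-1))) x := by
    intro x hx
    have hx0 : (0:ℝ) < x := hx
    have hx1 : (0:ℝ) < 1+x := by linarith
    have d5 : HasDerivAt (fun s : ℝ => (1+s)^(1+2*a)) ((1+2*a)*(1+x)^(1+2*a-1)) x := by
      have := ((hasDerivAt_id x).const_add 1).rpow_const (p := 1+2*a) (Or.inl hx1.ne')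
      simpa using this
    have d6 : HasDerivAt (fun s : ℝ => s^(1+2*a)) ((1+2*a)*x^(1+2*a-1)) x :=
      Real.hasDerivAt_rpow_const (Or.inl hx0.ne')
    have d8 : HasDerivAt (fun s : ℝ => s^(1+a)) ((1+a)*x^(1+a-1)) x :=
      Real.hasDerivAt_rpow_const (Or.inl hx0.ne')
    have d9 : HasDerivAt (fun s : ℝ => (1+s)^a) (a*(1+x)^(a-1)) x := by
      have := ((hasDerivAt_id x).const_add 1).rpow_const (p := a) (Or.inl hx1.ne')
      simpa using this
    have dG := (d5.add d6).sub ((d8.mul d9).const_mul 2)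
    refine dG.congr_deriv ?_
    rw [show (1+2*a-1 : ℝ) = a+a by ring, show (1+a-1 : ℝ) = a by ring,
      rpow_add hx1 a a, rpow_add hx0 a a,
      rpow_sub hx1 a 1, rpow_one, rpow_add hx0 1 a, rpow_one]
    field_simp
    ring
  have hcont : ContinuousWithinAt
      (fun s : ℝ => (1+s)^(1+2*a) + s^(1+2*a) - 2*(s^(1+a)*(1+s)^a)) (Ici 0) 0 := by
    have c5 : ContinuousAt (fun s : ℝ => (1+s)^(1+2*a)) 0 :=
      ContinuousAt.rpow_const (by fun_prop) (Or.inl (by norm_num))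
    have c6 : ContinuousAt (fun s : ℝ => s^(1+2*a)) 0 :=
      Real.continuousAt_rpow_const 0 (1+2*a) (Or.inr (by linarith))
    have c7 : ContinuousAt (fun s : ℝ => s^(1+a)) 0 :=
      Real.continuousAt_rpow_const 0 (1+a) (Or.inr (by linarith))
    have c8 : ContinuousAt (fun s : ℝ => (1+s)^a) 0 :=
      ContinuousAt.rpow_const (by fun_prop) (Or.inl (by norm_num))
    exact ((c5.add c6).sub (continuousAt_const.mul (c7.mul c8))).continuousWithinAt
  have hF := integral_Ioi_of_hasDerivAt_of_tendsto hcont hderiv hintf (tendsto_G_neg ha1 ha0)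
  have hG0 : (1+(0:ℝ))^(1+2*a) + (0:ℝ)^(1+2*a) - 2*((0:ℝ)^(1+a)*(1+(0:ℝ))^a) = 1 := by
    rw [Real.zero_rpow (by linarith : (1+2*a:ℝ) ≠ 0), Real.zero_rpow (by linarith : (1+a:ℝ) ≠ 0)]
    norm_num
  rw [hG0] at hF
  have hsplit : ∫ x in Ioi (0:ℝ),
      ((2*a+1) * ((1+x)^a - x^a)^2 + 2*a * (x^a*(1+x)^(a-1)))
      = (2*a+1) * (∫ s in Ioi (0:ℝ), ((1+s)^a - s^a)^2)
        + 2*a * ∫ s in Ioi (0:ℝ), s^a*(1+s)^(a-1) := by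
    rw [integral_add (hint_g.const_mul _) (hint_β.const_mul _),
      integral_const_mul, integral_const_mul]
  rw [hsplit, hval_β] at hF
  have hga : Gamma (1-2*a) = -(2*a) * Gamma (-(2*a)) := by
    rw [show (1-2*a:ℝ) = -(2*a)+1 by ring, Gamma_add_one hq.ne']
  rw [hga]
  linear_combination hF

lemma core {a : ℝ} (ha1 : -(1/2:ℝ) < a) (ha2 : a < 1/2) :
    IntegrableOn (fun s : ℝ => ((1+s)^a - s^a)^2) (Ioi (0:ℝ)) ∧
    (2*a+1) * (∫ s in Ioi (0:ℝ), ((1+s)^a - s^a)^2) + 1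
      = Gamma (1+a) * Gamma (1-2*a) / Gamma (1-a) := by
  refine ⟨g_integrable ha1 ha2, ?_⟩
  rcases lt_trichotomy a 0 with h | h | h
  · exact case_neg ha1 h
  · subst h
    simp only [Real.rpow_zero, sub_self, zero_pow, ne_eq, OfNat.ofNat_ne_zero,
      not_false_eq_true, integral_zero]
    norm_num [Real.Gamma_one]
  · exact case_pos h ha2

end FBMaux

theorem fbm_variance_normalization (H : ℝ) (hH : H ∈ Set.Ioo (0:ℝ) 1) :
    IntegrableOn (fun s : ℝ => ((1 + s) ^ (H - 1/2) - s ^ (H - 1/2)) ^ 2) (Set.Ioi 0) ∧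
    (1 / Real.Gamma (H + 1/2) ^ 2) *
      ((∫ s in Set.Ioi (0:ℝ), ((1 + s) ^ (H - 1/2) - s ^ (H - 1/2)) ^ 2) + 1 / (2 * H)) =
      1 / (Real.Gamma (2 * H + 1) * Real.sin (π * H)) := by
  obtain ⟨h0, h1⟩ := hH
  obtain ⟨hint, hval⟩ := FBMaux.core (a := H - 1/2) (by linarith) (by linarith)
  refine ⟨hint, ?_⟩
  rw [show 1+(H-1/2) = H+1/2 by ring, show 1-2*(H-1/2) = 2-2*H by ring,
    show 1-(H-1/2) = 3/2-H by ring, show 2*(H-1/2)+1 = 2*H by ring] at hval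
  by_cases hne : H = 1/2
  · subst hne
    rw [show π*(1/2:ℝ) = π/2 by ring]
    norm_num [Real.Gamma_one, Real.Gamma_two, Real.sin_pi_div_two]
  · exact FBMaux.gamma_final h0 h1 hne hval
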